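/- arXiv:2107.08913 — 2 statements merged into one kernel-verified Lean document; each statement's English description precedes it below -/
import Mathlib

section
/- There exists a Schwartz function g on ℝ such that supp g ⊆ [1, ∞), ∫_ℝ g = 1, and ∫_ℝ t^k g(t) dt = 0 for every positive integer k. -/
open MeasureTheory
set_option maxHeartbeats 1000000

noncomputable section Stmt0Aux

namespace Stmt0Aux

/-- Coefficients of the infinite product `∏_{k≥1} (1 - z/2^k)`. -/
def cc : ℕ → ℝ
  | 0 => 1
  | j+1 => -cc j / (2 ^ (j+1) - 1)

lemma two_le_pow (j : ℕ) : (2:ℝ) ≤ 2 ^ (j+1) := by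
  calc (2:ℝ) = 2 ^ 1 := (pow_one 2).symm
  _ ≤ 2 ^ (j+1) := pow_le_pow_right₀ one_le_two (Nat.le_add_left 1 j)

lemma denom_pos (j : ℕ) : (0:ℝ) < 2 ^ (j+1) - 1 := by
  have := two_le_pow j; linarith

lemma cc_succ (j : ℕ) : cc (j+1) = -cc j / (2 ^ (j+1) - 1) := rfl

lemma cc_succ_mul (j : ℕ) : cc (j+1) * ((2:ℝ) ^ (j+1) - 1) = -cc j := by
  rw [cc_succ, div_mul_cancel₀]
  exact (denom_pos j).ne'

lemma cc_mul_pow (j : ℕ) : cc (j+1) * (2:ℝ) ^ (j+1) = cc (j+1) - cc j := by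
  have h := cc_succ_mul j
  ring_nf at h ⊢
  linarith

lemma abs_cc_succ (j : ℕ) : |cc (j+1)| = |cc j| / (2 ^ (j+1) - 1) := by
  rw [cc_succ, abs_div, abs_neg, abs_of_pos (denom_pos j)]

/-- master summability lemma -/
lemma summable_master {r : ℝ} (hr : 0 ≤ r) : Summable (fun j => |cc j| * r ^ j) := by
  apply summable_of_ratio_norm_eventually_le (r := 1/2) (by norm_num)
  obtain ⟨N, hN⟩ := pow_unbounded_of_one_lt (2 * r) (one_lt_two (α := ℝ))
  filter_upwards [Filter.eventually_ge_atTop N] with j hj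
  have hd := denom_pos j
  have h2 : 2 * r ≤ 2 ^ (j+1) - 1 := by
    have h3 : (2:ℝ) ^ N ≤ 2 ^ j := pow_le_pow_right₀ one_le_two hj
    have h4 : (2:ℝ) ^ j + 1 ≤ 2 ^ (j+1) := by
      have : (1:ℝ) ≤ 2 ^ j := one_le_pow₀ one_le_two
      rw [pow_succ]; linarith
    linarith
  have key : |cc (j+1)| * r^(j+1) = (|cc j| * r^j) * (r / (2^(j+1)-1)) := by
    rw [abs_cc_succ, pow_succ]; ring
  have hrr : r / (2^(j+1)-1) ≤ 1/2 := by
    rw [div_le_iff₀ hd]; linarith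
  rw [Real.norm_eq_abs, Real.norm_eq_abs,
    abs_of_nonneg (by positivity : (0:ℝ) ≤ |cc (j+1)| * r ^ (j+1)),
    abs_of_nonneg (by positivity : (0:ℝ) ≤ |cc j| * r ^ j), key]
  calc (|cc j| * r^j) * (r / (2^(j+1)-1)) ≤ (|cc j| * r^j) * (1/2) := by
        apply mul_le_mul_of_nonneg_left hrr (by positivity)
  _ = 1/2 * (|cc j| * r^j) := by ring

lemma summable_cc_pow (k : ℕ) : Summable (fun j => cc j * ((2:ℝ)^k)^j) := by
  apply Summable.of_norm_bounded (summable_master (r := (2:ℝ)^k) (by positivity))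
  intro j
  rw [Real.norm_eq_abs, abs_mul, abs_pow, abs_of_nonneg (by positivity : (0:ℝ) ≤ (2:ℝ)^k)]

/-- the value of the product at `2^k` -/
def S (k : ℕ) : ℝ := ∑' j, cc j * ((2:ℝ)^k)^j

lemma S_succ (k : ℕ) : S (k+1) = (1 - 2^k) * S k := by
  have hs0 := summable_cc_pow k
  have hs1 := summable_cc_pow (k+1)
  have hs0' : Summable (fun j => cc (j+1) * ((2:ℝ)^k)^(j+1)) :=
    ((summable_nat_add_iff 1).2 hs0)
  have hs1' : Summable (fun j => cc j * ((2:ℝ)^k)^(j+1)) := by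
    have : Summable (fun j => ((2:ℝ)^k) * (cc j * ((2:ℝ)^k)^j)) := hs0.mul_left _
    apply this.congr
    intro j; rw [pow_succ]; ring
  have key : ∀ j, cc (j+1) * ((2:ℝ)^(k+1))^(j+1)
      = cc (j+1) * ((2:ℝ)^k)^(j+1) - cc j * ((2:ℝ)^k)^(j+1) := by
    intro j
    have h1 : ((2:ℝ)^(k+1))^(j+1) = ((2:ℝ)^k)^(j+1) * 2^(j+1) := by
      rw [← mul_pow, ← pow_succ]
    have h2 := cc_mul_pow j
    calc cc (j+1) * ((2:ℝ)^(k+1))^(j+1) = (cc (j+1) * 2^(j+1)) * ((2:ℝ)^k)^(j+1) := by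
          rw [h1]; ring
    _ = (cc (j+1) - cc j) * ((2:ℝ)^k)^(j+1) := by rw [h2]
    _ = _ := by ring
  have e1 : S (k+1) = cc 0 + ∑' j, cc (j+1) * ((2:ℝ)^(k+1))^(j+1) := by
    have h := Summable.tsum_eq_zero_add hs1
    simpa [S] using h
  have e2 : S k = cc 0 + ∑' j, cc (j+1) * ((2:ℝ)^k)^(j+1) := by
    have h := Summable.tsum_eq_zero_add hs0
    simpa [S] using h
  have e3 : ∑' j, cc j * ((2:ℝ)^k)^(j+1) = 2^k * S k := by
    have hfun : (fun j => cc j * ((2:ℝ)^k)^(j+1)) = (fun j => (2:ℝ)^k * (cc j * ((2:ℝ)^k)^j)) := by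
      funext j; rw [pow_succ]; ring
    rw [hfun, tsum_mul_left, S]
  calc S (k+1) = cc 0 + ∑' j, cc (j+1) * ((2:ℝ)^(k+1))^(j+1) := e1
  _ = cc 0 + ∑' j, (cc (j+1) * ((2:ℝ)^k)^(j+1) - cc j * ((2:ℝ)^k)^(j+1)) := by
        congr 1; exact tsum_congr key
  _ = cc 0 + (∑' j, cc (j+1) * ((2:ℝ)^k)^(j+1) - ∑' j, cc j * ((2:ℝ)^k)^(j+1)) := by
        rw [Summable.tsum_sub hs0' hs1']
  _ = S k - 2^k * S k := by rw [← e3]; rw [e2]; ring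
  _ = (1 - 2^k) * S k := by ring

lemma S_eq_zero {k : ℕ} (hk : 1 ≤ k) : S k = 0 := by
  induction k with
  | zero => omega
  | succ n ih =>
    rcases Nat.eq_or_lt_of_le hk with h | h
    · have : n = 0 := by omega
      subst this
      rw [S_succ 0]; norm_num
    · have hn : 1 ≤ n := by omega
      rw [S_succ n, ih hn, mul_zero]

lemma cc0 : cc 0 = 1 := rfl

lemma cc1 : cc 1 = -1 := by
  have h := cc_succ 0
  rw [cc0] at h
  norm_num at h
  exact h

lemma cc2 : cc 2 = 1/3 := by
  have h := cc_succ 1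
  rw [cc1] at h
  norm_num at h
  exact h

lemma cc3 : cc 3 = -(1/21) := by
  have h := cc_succ 2
  rw [cc2] at h
  norm_num at h
  linarith

lemma cc_tail (i : ℕ) : |cc (i+3)| ≤ (1/21) * (1/2)^i := by
  induction i with
  | zero =>
    rw [cc3, abs_neg, abs_of_nonneg (by norm_num : (0:ℝ) ≤ 1/21)]
    norm_num
  | succ n ih =>
    have h : |cc (n+1+3)| = |cc (n+3)| / (2^(n+3+1)-1) := abs_cc_succ (n+3)
    have hd : (2:ℝ) ≤ 2^(n+3+1)-1 := by
      have h2 : (2:ℝ)^2 ≤ 2^(n+3+1) := pow_le_pow_right₀ one_le_two (by omega)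
      norm_num at h2; linarith
    rw [h]
    calc |cc (n+3)| / (2^(n+3+1)-1) ≤ |cc (n+3)| / 2 := by
          apply div_le_div_of_nonneg_left (abs_nonneg _) (by norm_num) hd
    _ ≤ ((1/21) * (1/2)^n) / 2 := by gcongr
    _ = (1/21) * (1/2)^(n+1) := by rw [pow_succ]; ring

lemma summable_cc : Summable cc := by
  have := summable_cc_pow 0
  simpa using this

lemma S0_eq : S 0 = ∑' j, cc j := by
  rw [S]
  exact tsum_congr (by intro j; simp)

lemma S0_pos : 0 < S 0 := by
  have h1 : Summable (fun j => cc (j+1)) := (summable_nat_add_iff 1).2 summable_cc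
  have h2 : Summable (fun j => cc (j+2)) := by
    have := (summable_nat_add_iff 2).2 summable_cc
    exact this
  have h3 : Summable (fun j => cc (j+3)) := by
    have := (summable_nat_add_iff 3).2 summable_cc
    exact this
  have e0 : ∑' j, cc j = cc 0 + ∑' j, cc (j+1) := Summable.tsum_eq_zero_add summable_cc
  have e1 : ∑' j, cc (j+1) = cc 1 + ∑' j, cc (j+1+1) := Summable.tsum_eq_zero_add h1
  have e2 : ∑' j, cc (j+2) = cc 2 + ∑' j, cc (j+2+1) := Summable.tsum_eq_zero_add h2
  have hR : |∑' j, cc (j+3)| ≤ 2/21 := by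
    have hg : HasSum (fun i : ℕ => (1/21 : ℝ) * (1/2)^i) ((1/21:ℝ) * (1-1/2)⁻¹) :=
      (hasSum_geometric_of_lt_one (by norm_num : (0:ℝ) ≤ 1/2) (by norm_num)).mul_left (1/21 : ℝ)
    have hb := tsum_of_norm_bounded hg (fun i => by
      rw [Real.norm_eq_abs]; exact cc_tail i)
    rw [Real.norm_eq_abs] at hb
    calc |∑' j, cc (j+3)| ≤ (1/21:ℝ) * (1-1/2)⁻¹ := hb
    _ = 2/21 := by norm_num
  have heq : S 0 = cc 0 + cc 1 + cc 2 + ∑' j, cc (j+3) := by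
    rw [S0_eq, e0, e1]
    have : ∑' j, cc (j+1+1) = ∑' j, cc (j+2) := by norm_num
    rw [this, e2]
    have : ∑' j, cc (j+2+1) = ∑' j, cc (j+3) := by norm_num
    rw [this]; ring
  rw [heq, cc0, cc1, cc2]
  have := abs_le.1 hR
  have h5 : -(2/21 : ℝ) ≤ ∑' j, cc (j+3) := this.1
  linarith

section Bump

def bump : ContDiffBump (3/2 : ℝ) := ⟨1/4, 1/2, by norm_num, by norm_num⟩

def φ : ℝ → ℝ := bump.normed volume

lemma φ_contDiff (n : ℕ∞) : ContDiff ℝ n φ := bump.contDiff_normed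

lemma φ_smooth : ContDiff ℝ (((⊤:ℕ∞)) : WithTop ℕ∞) φ := φ_contDiff ⊤

lemma φ_nonneg (x : ℝ) : 0 ≤ φ x := bump.nonneg_normed x

lemma φ_integral : (∫ x : ℝ, φ x) = 1 := bump.integral_normed

lemma φ_supp : Function.support φ ⊆ Set.Icc 1 2 := by
  have h : Function.support φ = Metric.ball (3/2 : ℝ) (1/2) := bump.support_normed_eq
  rw [h, Real.ball_eq_Ioo]
  intro x hx
  simp only [Set.mem_Ioo] at hx
  constructor <;> [linarith [hx.1]; linarith [hx.2]]

lemma φ_hcs : HasCompactSupport φ := bump.hasCompactSupport_normed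

lemma φ_deriv_bound (n : ℕ) : ∃ C : ℝ, 0 ≤ C ∧ ∀ x, ‖iteratedFDeriv ℝ n φ x‖ ≤ C := by
  obtain ⟨C, hC⟩ := (φ_smooth.continuous_iteratedFDeriv
    (by exact_mod_cast le_top)).bounded_above_of_compact_support (φ_hcs.iteratedFDeriv n)
  exact ⟨max C 0, le_max_right _ _, fun x => (hC x).trans (le_max_left _ _)⟩

def B (n : ℕ) : ℝ := (φ_deriv_bound n).choose

lemma B_nonneg (n : ℕ) : 0 ≤ B n := (φ_deriv_bound n).choose_spec.1

lemma B_bound (n : ℕ) (x : ℝ) : ‖iteratedFDeriv ℝ n φ x‖ ≤ B n :=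
  (φ_deriv_bound n).choose_spec.2 x

end Bump

section Fdef

def aa (j : ℕ) : ℝ := ((2:ℝ)^j)⁻¹

lemma aa_pos (j : ℕ) : 0 < aa j := by rw [aa]; positivity

lemma aa_le_one (j : ℕ) : aa j ≤ 1 := by
  rw [aa]
  rw [inv_le_one_iff₀]
  right
  exact one_le_pow₀ one_le_two

lemma aa_mul (j : ℕ) : (2:ℝ)^j * aa j = 1 := by
  rw [aa, mul_inv_cancel₀]
  positivity

def F (j : ℕ) : ℝ → ℝ := fun x => (cc j * aa j) • φ (aa j * x)

lemma F_contDiff (j : ℕ) {n : ℕ∞} : ContDiff ℝ n (F j) := by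
  have h1 : ContDiff ℝ n (fun x : ℝ => φ (aa j * x)) :=
    (φ_contDiff n).comp ((contDiff_const (c := aa j)).mul contDiff_id)
  exact h1.const_smul _

lemma F_iter_norm (n j : ℕ) (x : ℝ) :
    ‖iteratedFDeriv ℝ n (F j) x‖ = |cc j| * aa j * (aa j)^n * ‖iteratedFDeriv ℝ n φ (aa j * x)‖ := by
  have h1 : ContDiff ℝ n (fun x : ℝ => φ (aa j * x)) :=
    (φ_contDiff n).comp ((contDiff_const (c := aa j)).mul contDiff_id)
  have hF : F j = (cc j * aa j) • (fun x : ℝ => φ (aa j * x)) := rfl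
  rw [hF, iteratedFDeriv_const_smul_apply h1.contDiffAt,
    norm_smul (cc j * aa j) (iteratedFDeriv ℝ n (fun x : ℝ => φ (aa j * x)) x)]
  have e2 : ‖iteratedFDeriv ℝ n (fun x : ℝ => φ (aa j * x)) x‖
      = (aa j)^n * ‖iteratedFDeriv ℝ n φ (aa j * x)‖ := by
    rw [norm_iteratedFDeriv_eq_norm_iteratedDeriv]
    rw [iteratedDeriv_comp_const_smul (φ_contDiff n) (aa j)]
    rw [norm_smul, norm_iteratedFDeriv_eq_norm_iteratedDeriv]
    congr 1
    rw [Real.norm_eq_abs, abs_pow, abs_of_pos (aa_pos j)]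
  rw [e2]
  rw [Real.norm_eq_abs, abs_mul, abs_of_pos (aa_pos j)]
  ring

def v (n j : ℕ) : ℝ := |cc j| * aa j * (aa j)^n * B n

lemma v_nonneg (n j : ℕ) : 0 ≤ v n j := by
  have := aa_pos j
  have := B_nonneg n
  rw [v]; positivity

lemma F_bound (n j : ℕ) (x : ℝ) : ‖iteratedFDeriv ℝ n (F j) x‖ ≤ v n j := by
  rw [F_iter_norm, v]
  have h1 := aa_pos j
  exact mul_le_mul_of_nonneg_left (B_bound n _) (by positivity)

lemma summable_v (n : ℕ) : Summable (v n) := by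
  have hle : ∀ j, v n j ≤ B n * (|cc j| * (1:ℝ)^j) := by
    intro j
    rw [v]
    have h1 := aa_pos j
    have h2 := aa_le_one j
    have h3 : (aa j)^n ≤ 1 := pow_le_one₀ h1.le h2
    have h4 := abs_nonneg (cc j)
    have h5 := B_nonneg n
    calc |cc j| * aa j * (aa j)^n * B n ≤ |cc j| * 1 * 1 * B n := by gcongr
    _ = B n * (|cc j| * (1:ℝ)^j) := by simp [mul_comm]
  exact Summable.of_nonneg_of_le (v_nonneg n) hle
    ((summable_master (by norm_num : (0:ℝ) ≤ 1)).mul_left _)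

end Fdef

section G0

def g0 : ℝ → ℝ := fun x => ∑' j, F j x

lemma g0_smooth : ContDiff ℝ (((⊤:ℕ∞)) : WithTop ℕ∞) g0 :=
  contDiff_tsum (fun j => F_contDiff j) (fun k _ => summable_v k)
    (fun k j x _ => F_bound k j x)

lemma g0_iter (n : ℕ) :
    iteratedFDeriv ℝ n g0 = fun x => ∑' j, iteratedFDeriv ℝ n (F j) x :=
  iteratedFDeriv_tsum (fun j => F_contDiff j) (fun k _ => summable_v k)
    (fun k j x _ => F_bound k j x) le_top

lemma F_supp (j : ℕ) : Function.support (F j) ⊆ Set.Icc ((2:ℝ)^j) ((2:ℝ)^(j+1)) := by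
  intro x hx
  have hφ : φ (aa j * x) ≠ 0 := by
    intro h0
    apply hx
    simp [F, h0]
  have hmem : aa j * x ∈ Set.Icc (1:ℝ) 2 := φ_supp (Function.mem_support.2 hφ)
  obtain ⟨hm1, hm2⟩ := hmem
  have hx1 : (2:ℝ)^j * (aa j * x) = x := by
    rw [← mul_assoc, aa_mul, one_mul]
  have hp : (0:ℝ) < 2^j := by positivity
  constructor
  · have := mul_le_mul_of_nonneg_left hm1 hp.le
    rw [hx1] at this
    linarith
  · have := mul_le_mul_of_nonneg_left hm2 hp.le
    rw [hx1] at this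
    calc x ≤ (2:ℝ)^j * 2 := this
    _ = 2^(j+1) := by rw [pow_succ]

lemma F_tsupp (j : ℕ) : tsupport (F j) ⊆ Set.Icc ((2:ℝ)^j) ((2:ℝ)^(j+1)) :=
  closure_minimal (F_supp j) isClosed_Icc

def w (k n j : ℕ) : ℝ := ((2:ℝ)^(j+1))^k * v n j

lemma w_nonneg (k n j : ℕ) : 0 ≤ w k n j := by
  have := v_nonneg n j
  rw [w]; positivity

lemma F_decay (k n j : ℕ) (x : ℝ) :
    ‖x‖^k * ‖iteratedFDeriv ℝ n (F j) x‖ ≤ w k n j := by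
  by_cases hx : x ∈ tsupport (F j)
  · obtain ⟨hx1, hx2⟩ := F_tsupp j hx
    have hp : (0:ℝ) < 2^j := by positivity
    have hxpos : (0:ℝ) < x := lt_of_lt_of_le hp hx1
    have h1 : ‖x‖ ≤ (2:ℝ)^(j+1) := by
      rw [Real.norm_eq_abs, abs_of_pos hxpos]; exact hx2
    rw [w]
    have h2 : ‖x‖^k ≤ ((2:ℝ)^(j+1))^k := by
      apply pow_le_pow_left₀ (norm_nonneg x) h1
    exact mul_le_mul h2 (F_bound n j x) (norm_nonneg _) (by positivity)
  · have h0 : iteratedFDeriv ℝ n (F j) x = 0 := by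
      by_contra hne
      exact hx (support_iteratedFDeriv_subset n (Function.mem_support.2 hne))
    rw [h0]
    simp only [norm_zero, mul_zero]
    exact w_nonneg k n j

lemma summable_w (k n : ℕ) : Summable (w k n) := by
  have hle : ∀ j, w k n j ≤ ((2:ℝ)^k * B n) * (|cc j| * ((2:ℝ)^k)^j) := by
    intro j
    rw [w, v]
    have h1 := aa_pos j
    have h2 := aa_le_one j
    have h3 : (aa j)^n ≤ 1 := pow_le_one₀ h1.le h2
    have h5 := B_nonneg n
    have e1 : ((2:ℝ)^(j+1))^k = (2:ℝ)^k * ((2:ℝ)^k)^j := by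
      rw [← pow_mul, ← pow_mul, ← pow_add]
      congr 1
      ring
    rw [e1]
    calc (2:ℝ)^k * ((2:ℝ)^k)^j * (|cc j| * aa j * (aa j)^n * B n)
        ≤ (2:ℝ)^k * ((2:ℝ)^k)^j * (|cc j| * 1 * 1 * B n) := by
          gcongr
    _ = ((2:ℝ)^k * B n) * (|cc j| * ((2:ℝ)^k)^j) := by ring
  exact Summable.of_nonneg_of_le (w_nonneg k n) hle
    ((summable_master (by positivity : (0:ℝ) ≤ (2:ℝ)^k)).mul_left _)

lemma summable_F_iter (n : ℕ) (x : ℝ) :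
    Summable (fun j => iteratedFDeriv ℝ n (F j) x) :=
  Summable.of_norm_bounded (summable_v n) (fun j => F_bound n j x)

lemma g0_decay (k n : ℕ) : ∃ C, ∀ x, ‖x‖^k * ‖iteratedFDeriv ℝ n g0 x‖ ≤ C := by
  refine ⟨∑' j, w k n j, fun x => ?_⟩
  rw [g0_iter n]
  have hs := summable_F_iter n x
  calc ‖x‖^k * ‖∑' j, iteratedFDeriv ℝ n (F j) x‖
      = ‖(‖x‖^k) • ∑' j, iteratedFDeriv ℝ n (F j) x‖ := by
        rw [norm_smul (‖x‖^k) (∑' j, iteratedFDeriv ℝ n (F j) x),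
          Real.norm_of_nonneg (pow_nonneg (norm_nonneg x) k)]
  _ = ‖∑' j, (‖x‖^k) • iteratedFDeriv ℝ n (F j) x‖ := by
        rw [Summable.tsum_const_smul _ hs]
  _ ≤ ∑' j, w k n j := by
        apply tsum_of_norm_bounded (summable_w k n).hasSum
        intro j
        rw [norm_smul (‖x‖^k) (iteratedFDeriv ℝ n (F j) x)]
        rw [Real.norm_of_nonneg (pow_nonneg (norm_nonneg x) k)]
        exact F_decay k n j x

def gS : SchwartzMap ℝ ℝ := ⟨g0, g0_smooth, g0_decay⟩

lemma gS_apply (x : ℝ) : gS x = g0 x := rfl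

lemma g0_zero {x : ℝ} (hx : x < 1) : g0 x = 0 := by
  rw [g0]
  convert tsum_zero with j
  by_contra hne
  have := F_supp j (Function.mem_support.2 hne)
  have hp : (1:ℝ) ≤ 2^j := one_le_pow₀ one_le_two
  have := this.1
  linarith

end G0

section Integrals

def m (k : ℕ) : ℝ := ∫ u : ℝ, u^k * φ u

lemma m_zero : m 0 = 1 := by
  rw [m]
  simp only [pow_zero, one_mul]
  exact φ_integral

def mAbs (k : ℕ) : ℝ := ∫ u : ℝ, |u|^k * φ u

lemma F_cont (j : ℕ) : Continuous (F j) := (F_contDiff j (n := 0)).continuous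

lemma F_hcs (j : ℕ) : HasCompactSupport (F j) := by
  apply HasCompactSupport.of_support_subset_isCompact isCompact_Icc (F_supp j)

lemma Fk_integrable (k j : ℕ) : Integrable (fun t : ℝ => t^k * F j t) := by
  apply Continuous.integrable_of_hasCompactSupport
  · exact (continuous_pow k).mul (F_cont j)
  · exact HasCompactSupport.mul_left (F_hcs j)

lemma integral_phi_scaled (k j : ℕ) :
    (∫ t : ℝ, t^k * φ (aa j * t)) = ((2:ℝ)^j) * ((2:ℝ)^j)^k * m k := by
  have h := MeasureTheory.Measure.integral_comp_mul_left
    (fun u : ℝ => ((2:ℝ)^j * u)^k * φ u) (aa j)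
  have e1 : ∀ x : ℝ, (2:ℝ)^j * (aa j * x) = x := fun x => by
    rw [← mul_assoc, aa_mul, one_mul]
  simp only [e1] at h
  rw [h]
  have e2 : |(aa j)⁻¹| = (2:ℝ)^j := by
    rw [aa, inv_inv, abs_of_pos (by positivity)]
  rw [e2]
  have e3 : (∫ u : ℝ, ((2:ℝ)^j * u)^k * φ u) = ((2:ℝ)^j)^k * m k := by
    rw [m, ← MeasureTheory.integral_const_mul]
    congr 1
    funext u
    rw [mul_pow]
    ring
  rw [e3, smul_eq_mul]
  ring

lemma integral_phi_scaled_abs (k j : ℕ) :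
    (∫ t : ℝ, |t|^k * φ (aa j * t)) = ((2:ℝ)^j) * ((2:ℝ)^j)^k * mAbs k := by
  have h := MeasureTheory.Measure.integral_comp_mul_left
    (fun u : ℝ => |(2:ℝ)^j * u|^k * φ u) (aa j)
  have e1 : ∀ x : ℝ, (2:ℝ)^j * (aa j * x) = x := fun x => by
    rw [← mul_assoc, aa_mul, one_mul]
  simp only [e1] at h
  rw [h]
  have e2 : |(aa j)⁻¹| = (2:ℝ)^j := by
    rw [aa, inv_inv, abs_of_pos (by positivity)]
  rw [e2]
  have e3 : (∫ u : ℝ, |(2:ℝ)^j * u|^k * φ u) = ((2:ℝ)^j)^k * mAbs k := by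
    rw [mAbs, ← MeasureTheory.integral_const_mul]
    congr 1
    funext u
    rw [abs_mul, abs_of_pos (by positivity : (0:ℝ) < (2:ℝ)^j), mul_pow]
    ring
  rw [e3, smul_eq_mul]
  ring

lemma moment_F (k j : ℕ) : (∫ t : ℝ, t^k * F j t) = cc j * ((2:ℝ)^k)^j * m k := by
  have e : ∀ t : ℝ, t^k * F j t = (cc j * aa j) * (t^k * φ (aa j * t)) := by
    intro t
    rw [F]
    simp only [smul_eq_mul]
    ring
  simp only [e]
  rw [MeasureTheory.integral_const_mul, integral_phi_scaled]
  have h1 := aa_mul j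
  have h2 : ((2:ℝ)^j)^k = ((2:ℝ)^k)^j := pow_right_comm 2 j k
  calc cc j * aa j * ((2:ℝ)^j * ((2:ℝ)^j)^k * m k)
      = cc j * ((2:ℝ)^j * aa j) * (((2:ℝ)^j)^k * m k) := by ring
  _ = cc j * ((2:ℝ)^k)^j * m k := by rw [h1, h2]; ring

lemma moment_F_norm (k j : ℕ) :
    (∫ t : ℝ, ‖t^k * F j t‖) = |cc j| * ((2:ℝ)^k)^j * mAbs k := by
  have e : ∀ t : ℝ, ‖t^k * F j t‖ = (|cc j| * aa j) * (|t|^k * φ (aa j * t)) := by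
    intro t
    rw [F]
    simp only [smul_eq_mul]
    rw [Real.norm_eq_abs, abs_mul, abs_mul, abs_mul, abs_pow,
      abs_of_pos (aa_pos j), abs_of_nonneg (φ_nonneg _)]
    ring
  simp only [e]
  rw [MeasureTheory.integral_const_mul, integral_phi_scaled_abs]
  have h1 := aa_mul j
  have h2 : ((2:ℝ)^j)^k = ((2:ℝ)^k)^j := pow_right_comm 2 j k
  calc |cc j| * aa j * ((2:ℝ)^j * ((2:ℝ)^j)^k * mAbs k)
      = |cc j| * ((2:ℝ)^j * aa j) * (((2:ℝ)^j)^k * mAbs k) := by ring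
  _ = |cc j| * ((2:ℝ)^k)^j * mAbs k := by rw [h1, h2]; ring

lemma mAbs_nonneg (k : ℕ) : 0 ≤ mAbs k := by
  rw [mAbs]
  apply MeasureTheory.integral_nonneg
  intro u
  have := φ_nonneg u
  positivity

lemma summable_moment_norm (k : ℕ) :
    Summable (fun j => ∫ t : ℝ, ‖t^k * F j t‖) := by
  apply Summable.congr (f := fun j => |cc j| * ((2:ℝ)^k)^j * mAbs k)
  · exact (summable_master (by positivity : (0:ℝ) ≤ (2:ℝ)^k)).mul_right _
  · intro j
    rw [moment_F_norm]

lemma moment_g0 (k : ℕ) : (∫ t : ℝ, t^k * g0 t) = S k * m k := by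
  have h := MeasureTheory.integral_tsum_of_summable_integral_norm
    (fun j => Fk_integrable k j) (summable_moment_norm k)
  have e : ∀ t : ℝ, (∑' j, t^k * F j t) = t^k * g0 t := by
    intro t
    rw [g0, tsum_mul_left]
  calc (∫ t : ℝ, t^k * g0 t) = ∫ t : ℝ, ∑' j, t^k * F j t := by
        congr 1
        funext t
        rw [e t]
  _ = ∑' j, ∫ t : ℝ, t^k * F j t := h.symm
  _ = ∑' j, cc j * ((2:ℝ)^k)^j * m k := tsum_congr (fun j => moment_F k j)
  _ = (∑' j, cc j * ((2:ℝ)^k)^j) * m k := tsum_mul_right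
  _ = S k * m k := rfl

end Integrals


end Stmt0Aux
end Stmt0Aux

/-- There exists a Schwartz function `g` on `ℝ` supported in `[1, ∞)` with
`∫ g = 1` and all higher moments `∫ t^k g(t) dt = 0` for `k ≥ 1`. -/
theorem stmt0 :
    ∃ g : SchwartzMap ℝ ℝ,
      tsupport g ⊆ Set.Ici (1 : ℝ) ∧
      (∫ t : ℝ, g t) = 1 ∧
      ∀ k : ℕ, 0 < k → (∫ t : ℝ, t ^ k * g t) = 0 := by
  classical
  refine ⟨(Stmt0Aux.S 0)⁻¹ • Stmt0Aux.gS, ?_, ?_, ?_⟩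
  · apply closure_minimal _ isClosed_Ici
    intro x hx
    by_contra hlt
    simp only [Set.mem_Ici, not_le] at hlt
    apply hx
    show ((Stmt0Aux.S 0)⁻¹ • Stmt0Aux.gS) x = 0
    have hcoe : ((Stmt0Aux.S 0)⁻¹ • Stmt0Aux.gS) x = (Stmt0Aux.S 0)⁻¹ • (Stmt0Aux.gS x) := rfl
    rw [hcoe, Stmt0Aux.gS_apply, Stmt0Aux.g0_zero hlt, smul_zero]
  · have hcoe : ∀ x : ℝ, ((Stmt0Aux.S 0)⁻¹ • Stmt0Aux.gS) x = (Stmt0Aux.S 0)⁻¹ * Stmt0Aux.g0 x :=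
      fun x => rfl
    simp only [hcoe]
    rw [MeasureTheory.integral_const_mul]
    have h0 : (∫ t : ℝ, Stmt0Aux.g0 t) = Stmt0Aux.S 0 := by
      have := Stmt0Aux.moment_g0 0
      simpa [Stmt0Aux.m_zero] using this
    rw [h0, inv_mul_cancel₀ (ne_of_gt Stmt0Aux.S0_pos)]
  · intro k hk
    have hcoe : ∀ x : ℝ, ((Stmt0Aux.S 0)⁻¹ • Stmt0Aux.gS) x = (Stmt0Aux.S 0)⁻¹ * Stmt0Aux.g0 x :=
      fun x => rfl
    simp only [hcoe]
    have e : ∀ t : ℝ, t^k * ((Stmt0Aux.S 0)⁻¹ * Stmt0Aux.g0 t)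
        = (Stmt0Aux.S 0)⁻¹ * (t^k * Stmt0Aux.g0 t) := fun t => by ring
    simp only [e]
    rw [MeasureTheory.integral_const_mul, Stmt0Aux.moment_g0 k,
      Stmt0Aux.S_eq_zero hk, zero_mul, mul_zero]
end

section
/- Let n ≥ 2 be an integer, β ≥ 0, α > -1 with α < β - 1/2, and 0 < δ < 1/2. Then there is a constant C depending only on n, α, β such that ∫_0^1 ∫_0^1 ∫_0^1 s_1^α t^{2n-3} / [(δ + s_1 + s_2 + t²)^{2+β} (δ + s_1 + s_2 + t)^{2n-3}] ds_1 ds_2 dt ≤ C δ^{α - β + 1/2}. -/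
open MeasureTheory Set

lemma aux_int {α β : ℝ} (hα : -1 < α) {a : ℝ} (ha : 0 < a) :
    IntegrableOn (fun s : ℝ => s ^ α / (a + s) ^ ((2:ℝ) + β)) (Ioo (0:ℝ) 1) := by
  have h1 : IntervalIntegrable (fun s : ℝ => s ^ α) volume 0 1 :=
    intervalIntegral.intervalIntegrable_rpow' hα
  have h2 : ContinuousOn (fun s : ℝ => ((a + s) ^ ((2:ℝ) + β))⁻¹) (Set.uIcc (0:ℝ) 1) := by
    apply ContinuousOn.inv₀
    · refine (continuousOn_const.add continuousOn_id).rpow_const fun x hx => Or.inl ?_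
      rw [Set.uIcc_of_le (by norm_num : (0:ℝ) ≤ 1)] at hx
      have hx0 : (0:ℝ) ≤ x := hx.1
      show a + x ≠ 0
      positivity
    · intro x hx
      rw [Set.uIcc_of_le (by norm_num : (0:ℝ) ≤ 1)] at hx
      have hx0 : (0:ℝ) ≤ x := hx.1
      positivity
  have h3 := h1.mul_continuousOn h2
  rw [intervalIntegrable_iff_integrableOn_Ioo_of_le (by norm_num : (0:ℝ) ≤ 1)] at h3
  simpa [div_eq_mul_inv] using h3

lemma int_rpow_Ioo {α : ℝ} (hα : -1 < α) {m : ℝ} (hm : 0 ≤ m) :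
    ∫ s in Ioo (0:ℝ) m, s ^ α = m ^ (α + 1) / (α + 1) := by
  rw [← integral_Ioc_eq_integral_Ioo, ← intervalIntegral.integral_of_le hm,
    integral_rpow (Or.inl hα),
    Real.zero_rpow (by linarith : α + 1 ≠ 0)]
  ring

lemma lemA {α β : ℝ} (hα : -1 < α) (hβ : 0 ≤ β) (hαβ : α < β - 1/2) {a : ℝ} (ha : 0 < a) :
    ∫ s in Ioo (0:ℝ) 1, s ^ α / (a + s) ^ ((2:ℝ) + β) ≤
      (1/(α+1) + 1/(β+1-α)) * a ^ (α - β - 1) := by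
  have hα1 : (0:ℝ) < α + 1 := by linarith
  have hba1 : (0:ℝ) < β + 1 - α := by linarith
  have hrw : ∀ m : ℝ, 0 < m →
      ∫ s in Ioo (0:ℝ) m, s ^ α / a ^ ((2:ℝ) + β)
        = m ^ (α + 1) / (α + 1) / a ^ ((2:ℝ) + β) := by
    intro m hm
    rw [integral_div, int_rpow_Ioo hα hm.le]
  have hmono : ∀ m : ℝ, 0 < m → m ≤ 1 →
      ∫ s in Ioo (0:ℝ) m, s ^ α / (a + s) ^ ((2:ℝ) + β)
        ≤ ∫ s in Ioo (0:ℝ) m, s ^ α / a ^ ((2:ℝ) + β) := by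
    intro m hm hm1
    apply setIntegral_mono_on
    · exact (aux_int hα ha (β := β)).mono_set (Ioo_subset_Ioo le_rfl hm1)
    · refine Integrable.div_const ?_ _
      have := intervalIntegral.intervalIntegrable_rpow' (a := 0) (b := m) hα
      rw [intervalIntegrable_iff_integrableOn_Ioo_of_le hm.le] at this
      exact this
    · exact measurableSet_Ioo
    · intro s hs
      obtain ⟨hs0, hs1⟩ := hs
      gcongr <;> first | positivity | linarith
  rcases le_or_gt 1 a with h1a | h1a
  · calc ∫ s in Ioo (0:ℝ) 1, s ^ α / (a + s) ^ ((2:ℝ) + β)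
        ≤ ∫ s in Ioo (0:ℝ) 1, s ^ α / a ^ ((2:ℝ) + β) := hmono 1 one_pos le_rfl
      _ = 1 ^ (α + 1) / (α + 1) / a ^ ((2:ℝ) + β) := hrw 1 one_pos
      _ = (1 / (α + 1)) * a ^ (-((2:ℝ) + β)) := by
          rw [Real.rpow_neg ha.le, Real.one_rpow]; ring
      _ ≤ (1/(α+1) + 1/(β+1-α)) * a ^ (α - β - 1) := by
          apply mul_le_mul
          · have : (0:ℝ) < 1/(β+1-α) := by positivity
            linarith
          · exact Real.rpow_le_rpow_of_exponent_le h1a (by linarith)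
          · positivity
          · positivity
  · have hsplit : Ioo (0:ℝ) 1 = Ioo 0 a ∪ Ico a 1 := (Ioo_union_Ico_eq_Ioo ha h1a.le).symm
    have hdisj : Disjoint (Ioo (0:ℝ) a) (Ico a 1) := by
      rw [Set.disjoint_left]
      rintro x ⟨_, hxa⟩ ⟨hax, _⟩
      exact absurd hxa (not_lt.mpr hax)
    have hsub1 : Ioo (0:ℝ) a ⊆ Ioo 0 1 := Ioo_subset_Ioo le_rfl h1a.le
    have hsub2 : Ico a 1 ⊆ Ioo (0:ℝ) 1 := fun x hx => ⟨ha.trans_le hx.1, hx.2⟩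
    rw [hsplit, setIntegral_union hdisj measurableSet_Ico
      ((aux_int hα ha (β := β)).mono_set hsub1) ((aux_int hα ha (β := β)).mono_set hsub2)]
    have piece1 : ∫ s in Ioo (0:ℝ) a, s ^ α / (a + s) ^ ((2:ℝ) + β)
        ≤ a ^ (α - β - 1) / (α + 1) := by
      calc ∫ s in Ioo (0:ℝ) a, s ^ α / (a + s) ^ ((2:ℝ) + β)
          ≤ ∫ s in Ioo (0:ℝ) a, s ^ α / a ^ ((2:ℝ) + β) := hmono a ha h1a.le
        _ = a ^ (α + 1) / (α + 1) / a ^ ((2:ℝ) + β) := hrw a ha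
        _ = a ^ (α - β - 1) / (α + 1) := by
            rw [div_right_comm, ← Real.rpow_sub ha,
              show α + 1 - ((2:ℝ) + β) = α - β - 1 by ring]
    have piece2 : ∫ s in Ico a 1, s ^ α / (a + s) ^ ((2:ℝ) + β)
        ≤ a ^ (α - β - 1) / (β + 1 - α) := by
      have hint2 : IntegrableOn (fun s : ℝ => s ^ (α - 2 - β)) (Ico a 1) := by
        rw [integrableOn_Ico_iff_integrableOn_Ioo,
          ← intervalIntegrable_iff_integrableOn_Ioo_of_le h1a.le]
        apply intervalIntegral.intervalIntegrable_rpow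
        right
        rw [Set.uIcc_of_le h1a.le]
        rintro ⟨h0a, -⟩
        exact absurd h0a (not_le.mpr ha)
      calc ∫ s in Ico a 1, s ^ α / (a + s) ^ ((2:ℝ) + β)
          ≤ ∫ s in Ico a 1, s ^ (α - 2 - β) := by
            apply setIntegral_mono_on ((aux_int hα ha (β := β)).mono_set hsub2) hint2
              measurableSet_Ico
            intro s hs
            have hs0 : 0 < s := ha.trans_le hs.1
            rw [show α - 2 - β = α - ((2:ℝ) + β) by ring, Real.rpow_sub hs0]
            gcongr <;> first | positivity | linarith
        _ ≤ a ^ (α - β - 1) / (β + 1 - α) := by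
            rw [integral_Ico_eq_integral_Ioo, ← integral_Ioc_eq_integral_Ioo,
              ← intervalIntegral.integral_of_le h1a.le,
              integral_rpow (Or.inr ⟨by intro h; linarith,
                by rw [Set.uIcc_of_le h1a.le]; rintro ⟨h0a, -⟩; exact absurd h0a (not_le.mpr ha)⟩)]
            rw [Real.one_rpow, show α - 2 - β + 1 = α - β - 1 by ring]
            have hne : α - β - 1 ≠ 0 := by intro h; rw [sub_eq_zero] at h; linarith
            have key : (1 - a ^ (α - β - 1)) / (α - β - 1)
                = (a ^ (α - β - 1) - 1) / (β + 1 - α) := by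
              rw [div_eq_div_iff hne hba1.ne']
              ring
            rw [key]
            have h1 : (0:ℝ) ≤ a ^ (α - β - 1) := Real.rpow_nonneg ha.le _
            gcongr
            linarith
    have : (1/(α+1) + 1/(β+1-α)) * a ^ (α - β - 1)
        = a ^ (α - β - 1) / (α + 1) + a ^ (α - β - 1) / (β + 1 - α) := by
      field_simp
    rw [this]
    exact add_le_add piece1 piece2

lemma lemB {α β : ℝ} (hαβ : α < β - 1/2) {b : ℝ} (hb : 0 < b) :
    ∫ s in Ioo (0:ℝ) 1, (b + s) ^ (α - β - 1) ≤ b ^ (α - β) / (β - α) := by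
  have hba : (0:ℝ) < β - α := by linarith
  rw [← integral_Ioc_eq_integral_Ioo, ← intervalIntegral.integral_of_le
    (by norm_num : (0:ℝ) ≤ 1)]
  rw [intervalIntegral.integral_comp_add_left (fun y : ℝ => y ^ (α - β - 1)) b]
  rw [integral_rpow (Or.inr ⟨by intro h; linarith,
    by rw [Set.uIcc_of_le (by linarith : b + 0 ≤ b + 1)]
       rintro ⟨h0b, -⟩; linarith⟩)]
  rw [show α - β - 1 + 1 = α - β by ring, add_zero]
  have hne : α - β ≠ 0 := by intro h; linarith [sub_eq_zero.mp h]
  have key : ((b + 1) ^ (α - β) - b ^ (α - β)) / (α - β)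
      = (b ^ (α - β) - (b + 1) ^ (α - β)) / (β - α) := by
    rw [div_eq_div_iff hne hba.ne']
    ring
  rw [key]
  have h1 : (0:ℝ) ≤ (b + 1) ^ (α - β) := Real.rpow_nonneg (by linarith) _
  gcongr
  linarith

lemma lemC {α β : ℝ} (hαβ : α < β - 1/2) {δ : ℝ} (hδ : 0 < δ) (hδ2 : δ < 1/2) :
    ∫ t in Ioo (0:ℝ) 1, (δ + t ^ 2) ^ (α - β) ≤
      (1 + 1/(2*(β-α)-1)) * δ ^ (α - β + 1/2) := by
  have hD : (0:ℝ) < 2*(β-α) - 1 := by linarith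
  set r : ℝ := δ ^ ((1:ℝ)/2) with hr
  have hr0 : 0 < r := Real.rpow_pos_of_pos hδ _
  have hr1 : r < 1 := by
    rw [hr]
    calc δ ^ ((1:ℝ)/2) < 1 ^ ((1:ℝ)/2) :=
      Real.rpow_lt_rpow hδ.le (by linarith) (by norm_num)
    _ = 1 := Real.one_rpow _
  have hcont : Continuous (fun t : ℝ => (δ + t ^ 2) ^ (α - β)) := by
    refine (continuous_const.add (continuous_pow 2)).rpow_const fun x => Or.inl ?_
    show δ + x ^ 2 ≠ 0
    positivity
  have int1 : IntegrableOn (fun t : ℝ => (δ + t ^ 2) ^ (α - β)) (Ioo 0 r) :=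
    (hcont.integrableOn_Icc).mono_set Ioo_subset_Icc_self
  have int2 : IntegrableOn (fun t : ℝ => (δ + t ^ 2) ^ (α - β)) (Ico r 1) :=
    (hcont.integrableOn_Icc).mono_set Ico_subset_Icc_self
  have hsplit : Ioo (0:ℝ) 1 = Ioo 0 r ∪ Ico r 1 := (Ioo_union_Ico_eq_Ioo hr0 hr1.le).symm
  have hdisj : Disjoint (Ioo (0:ℝ) r) (Ico r 1) := by
    rw [Set.disjoint_left]
    rintro x ⟨-, hxr⟩ ⟨hrx, -⟩
    exact absurd hxr (not_lt.mpr hrx)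
  rw [hsplit, setIntegral_union hdisj measurableSet_Ico int1 int2]
  have piece1 : ∫ t in Ioo (0:ℝ) r, (δ + t ^ 2) ^ (α - β) ≤ δ ^ (α - β + 1/2) := by
    calc ∫ t in Ioo (0:ℝ) r, (δ + t ^ 2) ^ (α - β)
        ≤ ∫ _t in Ioo (0:ℝ) r, δ ^ (α - β) := by
          apply setIntegral_mono_on int1
            (integrableOn_const measure_Ioo_lt_top.ne) measurableSet_Ioo
          intro t _
          exact Real.rpow_le_rpow_of_nonpos hδ (by nlinarith [sq_nonneg t]) (by linarith)
      _ = r * δ ^ (α - β) := by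
          rw [setIntegral_const, Real.volume_real_Ioo, smul_eq_mul, sub_zero,
            max_eq_left hr0.le]
      _ = δ ^ (α - β + 1/2) := by
          rw [hr, ← Real.rpow_add hδ]
          ring_nf
  have piece2 : ∫ t in Ico r 1, (δ + t ^ 2) ^ (α - β)
      ≤ δ ^ (α - β + 1/2) / (2*(β-α)-1) := by
    have h0uIcc : (0:ℝ) ∉ Set.uIcc r 1 := by
      rw [Set.uIcc_of_le hr1.le]
      rintro ⟨h0r, -⟩
      linarith
    have hint2 : IntegrableOn (fun t : ℝ => t ^ (2*(α-β))) (Ico r 1) := by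
      rw [integrableOn_Ico_iff_integrableOn_Ioo,
        ← intervalIntegrable_iff_integrableOn_Ioo_of_le hr1.le]
      exact intervalIntegral.intervalIntegrable_rpow (Or.inr h0uIcc)
    calc ∫ t in Ico r 1, (δ + t ^ 2) ^ (α - β)
        ≤ ∫ t in Ico r 1, t ^ (2*(α-β)) := by
          apply setIntegral_mono_on int2 hint2 measurableSet_Ico
          intro t ht
          have ht0 : 0 < t := hr0.trans_le ht.1
          have h1 : (δ + t ^ 2) ^ (α - β) ≤ (t ^ 2 : ℝ) ^ (α - β) :=
            Real.rpow_le_rpow_of_nonpos (by positivity) (by linarith) (by linarith)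
          calc (δ + t ^ 2) ^ (α - β) ≤ (t ^ 2 : ℝ) ^ (α - β) := h1
            _ = t ^ (2*(α-β)) := by
                rw [← Real.rpow_natCast t 2, ← Real.rpow_mul ht0.le]
                norm_num
      _ ≤ δ ^ (α - β + 1/2) / (2*(β-α)-1) := by
          rw [integral_Ico_eq_integral_Ioo, ← integral_Ioc_eq_integral_Ioo,
            ← intervalIntegral.integral_of_le hr1.le,
            integral_rpow (Or.inr ⟨by intro h; linarith, h0uIcc⟩), Real.one_rpow]
          have hrq : r ^ (2*(α-β)+1) = δ ^ (α - β + 1/2) := by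
            rw [hr, ← Real.rpow_mul hδ.le]
            norm_num
            ring_nf
          have hne : 2*(α-β) + 1 ≠ 0 := by intro h; linarith
          have key : (1 - r ^ (2*(α-β)+1)) / (2*(α-β)+1)
              = (r ^ (2*(α-β)+1) - 1) / (2*(β-α)-1) := by
            rw [div_eq_div_iff hne hD.ne']
            ring
          rw [key, hrq]
          have h1 : (0:ℝ) ≤ δ ^ (α - β + 1/2) := Real.rpow_nonneg hδ.le _
          gcongr
          linarith
  calc (∫ t in Ioo (0:ℝ) r, (δ + t ^ 2) ^ (α - β)) + ∫ t in Ico r 1, (δ + t ^ 2) ^ (α - β)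
      ≤ δ ^ (α - β + 1/2) + δ ^ (α - β + 1/2) / (2*(β-α)-1) := add_le_add piece1 piece2
    _ = (1 + 1/(2*(β-α)-1)) * δ ^ (α - β + 1/2) := by ring

/-- The anisotropic kernel estimate: for `n ≥ 2`, `β ≥ 0`, `-1 < α < β - 1/2`, there is
`C = C(n,α,β)` such that for all `0 < δ < 1/2`,
`∫∫∫ s₁^α t^{2n-3} / [(δ+s₁+s₂+t²)^{2+β} (δ+s₁+s₂+t)^{2n-3}] ≤ C δ^{α-β+1/2}`. -/
theorem stmt7 (n : ℕ) (hn : 2 ≤ n) (α β : ℝ) (hβ : 0 ≤ β) (hα : -1 < α)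
    (hαβ : α < β - 1 / 2) :
    ∃ C > 0, ∀ δ : ℝ, 0 < δ → δ < 1 / 2 →
      (∫ t in Set.Ioo (0 : ℝ) 1, ∫ s₂ in Set.Ioo (0 : ℝ) 1, ∫ s₁ in Set.Ioo (0 : ℝ) 1,
          s₁ ^ α * t ^ (2 * n - 3) /
            ((δ + s₁ + s₂ + t ^ 2) ^ ((2 : ℝ) + β) * (δ + s₁ + s₂ + t) ^ (2 * n - 3)))
        ≤ C * δ ^ (α - β + 1 / 2) := by
  have hα1 : (0:ℝ) < α + 1 := by linarith
  have hba : (0:ℝ) < β - α := by linarith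
  have hba1 : (0:ℝ) < β + 1 - α := by linarith
  have hD : (0:ℝ) < 2*(β-α) - 1 := by linarith
  set K₁ : ℝ := 1/(α+1) + 1/(β+1-α) with hK₁
  have hK₁pos : 0 < K₁ := by positivity
  refine ⟨K₁ / (β-α) * (1 + 1/(2*(β-α)-1)), by positivity, ?_⟩
  intro δ hδ hδ2
  -- nonnegativity of the innermost integrand
  have hF0 : ∀ t ∈ Ioo (0:ℝ) 1, ∀ s₂ ∈ Ioo (0:ℝ) 1, ∀ s₁ ∈ Ioo (0:ℝ) 1,
      0 ≤ s₁ ^ α * t ^ (2 * n - 3) /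
        ((δ + s₁ + s₂ + t ^ 2) ^ ((2 : ℝ) + β) * (δ + s₁ + s₂ + t) ^ (2 * n - 3)) := by
    intro t ht s₂ hs₂ s₁ hs₁
    have h1 : (0:ℝ) ≤ s₁ := hs₁.1.le
    have h2 : (0:ℝ) ≤ t := ht.1.le
    have h3 : (0:ℝ) ≤ δ + s₁ + s₂ + t ^ 2 := by nlinarith [hs₂.1.le, sq_nonneg t]
    have h4 : (0:ℝ) ≤ δ + s₁ + s₂ + t := by nlinarith [hs₂.1.le]
    exact div_nonneg (mul_nonneg (Real.rpow_nonneg h1 _) (pow_nonneg h2 _))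
      (mul_nonneg (Real.rpow_nonneg h3 _) (pow_nonneg h4 _))
  -- innermost bound
  have inner_bd : ∀ t ∈ Ioo (0:ℝ) 1, ∀ s₂ ∈ Ioo (0:ℝ) 1,
      (∫ s₁ in Set.Ioo (0:ℝ) 1,
          s₁ ^ α * t ^ (2 * n - 3) /
            ((δ + s₁ + s₂ + t ^ 2) ^ ((2 : ℝ) + β) * (δ + s₁ + s₂ + t) ^ (2 * n - 3)))
        ≤ K₁ * (δ + t ^ 2 + s₂) ^ (α - β - 1) := by
    intro t ht s₂ hs₂
    have ha : 0 < δ + t ^ 2 + s₂ := by nlinarith [hs₂.1, sq_nonneg t]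
    calc (∫ s₁ in Set.Ioo (0:ℝ) 1,
            s₁ ^ α * t ^ (2 * n - 3) /
              ((δ + s₁ + s₂ + t ^ 2) ^ ((2 : ℝ) + β) * (δ + s₁ + s₂ + t) ^ (2 * n - 3)))
        ≤ ∫ s₁ in Set.Ioo (0:ℝ) 1, s₁ ^ α / (δ + t ^ 2 + s₂ + s₁) ^ ((2:ℝ) + β) := by
          apply integral_mono_of_nonneg
          · filter_upwards [self_mem_ae_restrict measurableSet_Ioo] with s₁ hs₁
            exact hF0 t ht s₂ hs₂ s₁ hs₁
          · exact aux_int hα ha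
          · filter_upwards [self_mem_ae_restrict measurableSet_Ioo] with s₁ hs₁
            have hX : δ + s₁ + s₂ + t ^ 2 = δ + t ^ 2 + s₂ + s₁ := by ring
            rw [mul_div_mul_comm, hX]
            refine mul_le_of_le_one_right ?_ ?_
            · exact div_nonneg (Real.rpow_nonneg hs₁.1.le _)
                (Real.rpow_nonneg (by linarith [hs₁.1.le]) _)
            · refine div_le_one_of_le₀ (pow_le_pow_left₀ ht.1.le (by linarith [hs₁.1, hs₂.1]) _)
                (pow_nonneg (by linarith [hs₁.1, hs₂.1, ht.1.le]) _)
      _ ≤ K₁ * (δ + t ^ 2 + s₂) ^ (α - β - 1) := lemA hα hβ hαβ ha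
  -- middle bound
  have mid_bd : ∀ t ∈ Ioo (0:ℝ) 1,
      (∫ s₂ in Set.Ioo (0:ℝ) 1, ∫ s₁ in Set.Ioo (0:ℝ) 1,
          s₁ ^ α * t ^ (2 * n - 3) /
            ((δ + s₁ + s₂ + t ^ 2) ^ ((2 : ℝ) + β) * (δ + s₁ + s₂ + t) ^ (2 * n - 3)))
        ≤ K₁ / (β - α) * (δ + t ^ 2) ^ (α - β) := by
    intro t ht
    have hb : 0 < δ + t ^ 2 := by nlinarith [sq_nonneg t]
    have hcontOn : IntegrableOn (fun s₂ : ℝ => K₁ * (δ + t ^ 2 + s₂) ^ (α - β - 1))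
        (Ioo (0:ℝ) 1) := by
      refine (ContinuousOn.integrableOn_Icc ?_).mono_set Ioo_subset_Icc_self
      refine continuousOn_const.mul ?_
      refine ((continuousOn_const.add continuousOn_id).rpow_const fun x hx => Or.inl ?_)
      have : (0:ℝ) ≤ x := hx.1
      show δ + t ^ 2 + x ≠ 0
      positivity
    calc (∫ s₂ in Set.Ioo (0:ℝ) 1, ∫ s₁ in Set.Ioo (0:ℝ) 1,
            s₁ ^ α * t ^ (2 * n - 3) /
              ((δ + s₁ + s₂ + t ^ 2) ^ ((2 : ℝ) + β) * (δ + s₁ + s₂ + t) ^ (2 * n - 3)))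
        ≤ ∫ s₂ in Set.Ioo (0:ℝ) 1, K₁ * (δ + t ^ 2 + s₂) ^ (α - β - 1) := by
          apply integral_mono_of_nonneg
          · filter_upwards [self_mem_ae_restrict measurableSet_Ioo] with s₂ hs₂
            exact setIntegral_nonneg measurableSet_Ioo (hF0 t ht s₂ hs₂)
          · exact hcontOn
          · filter_upwards [self_mem_ae_restrict measurableSet_Ioo] with s₂ hs₂
            exact inner_bd t ht s₂ hs₂
      _ = K₁ * ∫ s₂ in Set.Ioo (0:ℝ) 1, (δ + t ^ 2 + s₂) ^ (α - β - 1) :=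
          integral_const_mul _ _
      _ ≤ K₁ * ((δ + t ^ 2) ^ (α - β) / (β - α)) :=
          mul_le_mul_of_nonneg_left (lemB hαβ hb) hK₁pos.le
      _ = K₁ / (β - α) * (δ + t ^ 2) ^ (α - β) := by ring
  -- outer bound
  have hcont3 : IntegrableOn (fun t : ℝ => K₁ / (β - α) * (δ + t ^ 2) ^ (α - β))
      (Ioo (0:ℝ) 1) := by
    refine (Continuous.integrableOn_Icc ?_).mono_set Ioo_subset_Icc_self
    refine continuous_const.mul ?_
    refine (continuous_const.add (continuous_pow 2)).rpow_const fun x => Or.inl ?_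
    show δ + x ^ 2 ≠ 0
    positivity
  calc (∫ t in Set.Ioo (0 : ℝ) 1, ∫ s₂ in Set.Ioo (0 : ℝ) 1, ∫ s₁ in Set.Ioo (0 : ℝ) 1,
          s₁ ^ α * t ^ (2 * n - 3) /
            ((δ + s₁ + s₂ + t ^ 2) ^ ((2 : ℝ) + β) * (δ + s₁ + s₂ + t) ^ (2 * n - 3)))
      ≤ ∫ t in Set.Ioo (0:ℝ) 1, K₁ / (β - α) * (δ + t ^ 2) ^ (α - β) := by
        apply integral_mono_of_nonneg
        · filter_upwards [self_mem_ae_restrict measurableSet_Ioo] with t ht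
          refine setIntegral_nonneg measurableSet_Ioo fun s₂ hs₂ => ?_
          exact setIntegral_nonneg measurableSet_Ioo (hF0 t ht s₂ hs₂)
        · exact hcont3
        · filter_upwards [self_mem_ae_restrict measurableSet_Ioo] with t ht
          exact mid_bd t ht
    _ = K₁ / (β - α) * ∫ t in Set.Ioo (0:ℝ) 1, (δ + t ^ 2) ^ (α - β) :=
        integral_const_mul _ _
    _ ≤ K₁ / (β - α) * ((1 + 1/(2*(β-α)-1)) * δ ^ (α - β + 1/2)) :=
        mul_le_mul_of_nonneg_left (lemC hαβ hδ hδ2) (by positivity)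
    _ = K₁ / (β-α) * (1 + 1/(2*(β-α)-1)) * δ ^ (α - β + 1/2) := by ring
end
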